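/- Let θ ∈ (0, π/2), t = tan θ, and define unit product vectors in ℂ²⊗ℂ²: φ₁ = (a|0⟩ + e^{2πi/3}b|1⟩)⊗(a|0⟩ + e^{πi/3}b|1⟩), φ₂ = (a|0⟩ + e^{4πi/3}b|1⟩)⊗(a|0⟩ + e^{5πi/3}b|1⟩), φ₃ = (a|0⟩ + b|1⟩)⊗(a|0⟩ − b|1⟩), where a = 1/√(1+tan θ) and b = 1/√(1+cot θ). Then (1/3)·Σ_{k=1}^{3} |φ_k⟩⟨φ_k| equals (1/(1+t)²)·N, where N is the 4×4 matrix in basis ordering |00⟩,|01⟩,|10⟩,|11⟩ with diagonal (1, t, t, t²), entries −t in positions (0,3) and (3,0), and zeros elsewhere. Consequently Ω₃ = (1/3)·Σ_{k=1}^{3}(I₄ − |φ_k⟩⟨φ_k|) = I₄ − (1/(1+t)²)·N, and each φ_k is orthogonal to ψ_θ = sin θ|00⟩ + cos θ|11⟩. -/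

import Mathlib

open Matrix

/-- The state `ψ_θ = sin θ·|00⟩ + cos θ·|11⟩` in `ℂ²⊗ℂ²`. -/
noncomputable def psiTheta (θ : ℝ) : Fin 2 × Fin 2 → ℂ :=
  fun p => if p = (0, 0) then (Real.sin θ : ℂ)
    else if p = (1, 1) then (Real.cos θ : ℂ) else 0

/-- `a = 1/√(1 + tan θ)`. -/
noncomputable def ampA (θ : ℝ) : ℝ := 1 / Real.sqrt (1 + Real.tan θ)

/-- `b = 1/√(1 + cot θ)`. -/
noncomputable def ampB (θ : ℝ) : ℝ := 1 / Real.sqrt (1 + Real.cos θ / Real.sin θ)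

/-- The product vector `(a|0⟩ + ωu·b|1⟩) ⊗ (a|0⟩ + ωv·b|1⟩)`. -/
noncomputable def prodVec (θ : ℝ) (ωu ωv : ℂ) : Fin 2 × Fin 2 → ℂ :=
  fun p => (if p.1 = 0 then (ampA θ : ℂ) else ωu * (ampB θ : ℂ))
    * (if p.2 = 0 then (ampA θ : ℂ) else ωv * (ampB θ : ℂ))

/-- `φ₁`. -/
noncomputable def phi1 (θ : ℝ) : Fin 2 × Fin 2 → ℂ :=
  prodVec θ (Complex.exp (2 * Real.pi * Complex.I / 3)) (Complex.exp (Real.pi * Complex.I / 3))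

/-- `φ₂`. -/
noncomputable def phi2 (θ : ℝ) : Fin 2 × Fin 2 → ℂ :=
  prodVec θ (Complex.exp (4 * Real.pi * Complex.I / 3)) (Complex.exp (5 * Real.pi * Complex.I / 3))

/-- `φ₃`. -/
noncomputable def phi3 (θ : ℝ) : Fin 2 × Fin 2 → ℂ :=
  prodVec θ 1 (-1)

/-- The matrix `N` with diagonal `(1, t, t, t²)`, entries `−t` in the `(|00⟩,|11⟩)` corners,
and zeros elsewhere. -/
noncomputable def Nmat (t : ℝ) : Matrix (Fin 2 × Fin 2) (Fin 2 × Fin 2) ℂ :=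
  Matrix.of fun p q =>
    if p = (0, 0) ∧ q = (0, 0) then 1
    else if p = (0, 1) ∧ q = (0, 1) then (t : ℂ)
    else if p = (1, 0) ∧ q = (1, 0) then (t : ℂ)
    else if p = (1, 1) ∧ q = (1, 1) then ((t ^ 2 : ℝ) : ℂ)
    else if (p = (0, 0) ∧ q = (1, 1)) ∨ (p = (1, 1) ∧ q = (0, 0)) then ((-t : ℝ) : ℂ)
    else 0

theorem stmt_14 (θ : ℝ) (hθ : θ ∈ Set.Ioo 0 (Real.pi / 2)) (t : ℝ) (ht : t = Real.tan θ) :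
    star (phi1 θ) ⬝ᵥ phi1 θ = 1 ∧ star (phi2 θ) ⬝ᵥ phi2 θ = 1 ∧ star (phi3 θ) ⬝ᵥ phi3 θ = 1 ∧
    (1/3 : ℂ) • (vecMulVec (phi1 θ) (star (phi1 θ)) + vecMulVec (phi2 θ) (star (phi2 θ))
        + vecMulVec (phi3 θ) (star (phi3 θ)))
      = ((1 / (1 + t) ^ 2 : ℝ) : ℂ) • Nmat t ∧
    (1/3 : ℂ) • (((1 : Matrix (Fin 2 × Fin 2) (Fin 2 × Fin 2) ℂ) - vecMulVec (phi1 θ) (star (phi1 θ)))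
        + ((1 : Matrix (Fin 2 × Fin 2) (Fin 2 × Fin 2) ℂ) - vecMulVec (phi2 θ) (star (phi2 θ)))
        + ((1 : Matrix (Fin 2 × Fin 2) (Fin 2 × Fin 2) ℂ) - vecMulVec (phi3 θ) (star (phi3 θ))))
      = (1 : Matrix (Fin 2 × Fin 2) (Fin 2 × Fin 2) ℂ) - ((1 / (1 + t) ^ 2 : ℝ) : ℂ) • Nmat t ∧
    star (psiTheta θ) ⬝ᵥ phi1 θ = 0 ∧ star (psiTheta θ) ⬝ᵥ phi2 θ = 0 ∧
    star (psiTheta θ) ⬝ᵥ phi3 θ = 0 := by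

  obtain ⟨h0, h2⟩ := hθ
  have hsin : 0 < Real.sin θ := Real.sin_pos_of_pos_of_lt_pi h0 (lt_trans h2 (by linarith [Real.pi_pos]))
  have hcos : 0 < Real.cos θ := Real.cos_pos_of_mem_Ioo ⟨by linarith [Real.pi_pos], h2⟩
  have htan : Real.tan θ = Real.sin θ / Real.cos θ := Real.tan_eq_sin_div_cos θ
  have ht0 : 0 < t := by rw [ht, htan]; positivity
  have h1tR : (0:ℝ) < 1 + t := by linarith
  have rA : ampA θ ^ 2 = 1 / (1 + t) := by
    rw [ampA, div_pow, one_pow, Real.sq_sqrt (by rw [← ht]; linarith), ht]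
  have rB : ampB θ ^ 2 = t / (1 + t) := by
    rw [ampB, div_pow, one_pow,
      Real.sq_sqrt (by have := div_nonneg hcos.le hsin.le; linarith)]
    rw [ht, htan]; field_simp
    ring
  have rAB : Real.sin θ * ampA θ ^ 2 = Real.cos θ * ampB θ ^ 2 := by
    rw [rA, rB, ht, htan]; field_simp
  have h1t : ((1:ℂ) + t) ≠ 0 := by
    simpa using Complex.ofReal_ne_zero.mpr h1tR.ne'
  have hA : ((1:ℂ) + t) * (ampA θ : ℂ)^2 = 1 := by
    have := congrArg (Complex.ofReal) rA; push_cast at this; rw [this]; field_simp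
  have hB : ((1:ℂ) + t) * (ampB θ : ℂ)^2 = t := by
    have := congrArg (Complex.ofReal) rB; push_cast at this; rw [this]; field_simp
  have hAB : (Real.sin θ : ℂ) * (ampA θ : ℂ)^2 = (Real.cos θ : ℂ) * (ampB θ : ℂ)^2 := by
    rw [← Complex.ofReal_pow, ← Complex.ofReal_pow, ← Complex.ofReal_mul, ← Complex.ofReal_mul, rAB]
  set x : ℂ := Complex.exp (Real.pi * Complex.I / 3) with hxdef
  have hxval : x = (1/2 : ℂ) + ((Real.sqrt 3 / 2 : ℝ) : ℂ) * Complex.I := by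
    rw [hxdef, show ((Real.pi:ℂ) * Complex.I / 3) = ((Real.pi/3 : ℝ):ℂ) * Complex.I by push_cast; ring,
      Complex.exp_mul_I, ← Complex.ofReal_cos, ← Complex.ofReal_sin,
      Real.cos_pi_div_three, Real.sin_pi_div_three]
    push_cast; ring
  have h3 : ((Real.sqrt 3 : ℝ) : ℂ)^2 = 3 := by
    rw [← Complex.ofReal_pow, Real.sq_sqrt (by norm_num)]; norm_num
  have hx2 : x^2 = x - 1 := by
    rw [hxval]; push_cast
    linear_combination (Complex.I^2/4) * h3 + ((3:ℂ)/4) * Complex.I_sq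
  have hcx : (starRingEnd ℂ) x = 1 - x := by
    rw [hxval]
    simp only [map_add, _root_.map_mul, map_div₀, _root_.map_one, map_ofNat, Complex.conj_I, Complex.conj_ofReal]
    ring
  have e2 : Complex.exp (2 * Real.pi * Complex.I / 3) = x - 1 := by
    rw [show ((2:ℂ) * Real.pi * Complex.I / 3) = (2:ℕ) * (Real.pi * Complex.I / 3) by push_cast; ring,
      Complex.exp_nat_mul, ← hxdef]; linear_combination hx2
  have e4 : Complex.exp (4 * Real.pi * Complex.I / 3) = -x := by
    rw [show ((4:ℂ) * Real.pi * Complex.I / 3) = (4:ℕ) * (Real.pi * Complex.I / 3) by push_cast; ring,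
      Complex.exp_nat_mul, ← hxdef]; linear_combination (x^2 + x) * hx2
  have e5 : Complex.exp (5 * Real.pi * Complex.I / 3) = 1 - x := by
    rw [show ((5:ℂ) * Real.pi * Complex.I / 3) = (5:ℕ) * (Real.pi * Complex.I / 3) by push_cast; ring,
      Complex.exp_nat_mul, ← hxdef]; linear_combination (x^3 + x^2 - 1) * hx2
  have hφ1 : phi1 θ = prodVec θ (x - 1) x := by rw [phi1, e2, hxdef]
  have hφ2 : phi2 θ = prodVec θ (-x) (1 - x) := by rw [phi2, e4, e5]
  have hs : (ampA θ : ℂ)^2 + (ampB θ : ℂ)^2 = 1 := by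
    have h := mul_left_cancel₀ h1t
      (show ((1:ℂ)+t) * ((ampA θ : ℂ)^2 + (ampB θ : ℂ)^2) = (1+(t:ℂ)) * 1 by
        linear_combination hA + hB)
    simpa using h
  have hBA : (ampB θ : ℂ)^2 = (t:ℂ) * (ampA θ : ℂ)^2 := by
    refine mul_left_cancel₀ h1t ?_
    linear_combination hB - (t:ℂ) * hA
  have hscal : ((1 / (1 + t) ^ 2 : ℝ) : ℂ) = (ampA θ : ℂ)^4 := by
    push_cast
    rw [eq_comm, eq_div_iff (pow_ne_zero 2 h1t)]
    linear_combination (((1:ℂ)+t) * (ampA θ:ℂ)^2 + 1) * hA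
  have hn1 : star (phi1 θ) ⬝ᵥ phi1 θ = 1 := by
    rw [hφ1]
    simp only [dotProduct, Fintype.sum_prod_type, Fin.sum_univ_two, prodVec, Pi.star_apply,
      RCLike.star_def, _root_.map_mul, map_sub, _root_.map_one, map_neg, map_zero, hcx,
      Complex.conj_ofReal, Fin.isValue, if_true, one_ne_zero, if_false, reduceIte]
    linear_combination ((ampA θ:ℂ)^2 + (ampB θ:ℂ)^2 + 1) * hs + (-2*(ampA θ:ℂ)^2*(ampB θ:ℂ)^2 - (ampB θ:ℂ)^4*(x - x^2 + 1)) * hx2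
  have hn2 : star (phi2 θ) ⬝ᵥ phi2 θ = 1 := by
    rw [hφ2]
    simp only [dotProduct, Fintype.sum_prod_type, Fin.sum_univ_two, prodVec, Pi.star_apply,
      RCLike.star_def, _root_.map_mul, map_sub, _root_.map_one, map_neg, map_zero, hcx,
      Complex.conj_ofReal, Fin.isValue, if_true, one_ne_zero, if_false, reduceIte]
    linear_combination ((ampA θ:ℂ)^2 + (ampB θ:ℂ)^2 + 1) * hs + (-2*(ampA θ:ℂ)^2*(ampB θ:ℂ)^2 - (ampB θ:ℂ)^4*(x - x^2 + 1)) * hx2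
  have hn3 : star (phi3 θ) ⬝ᵥ phi3 θ = 1 := by
    rw [phi3]
    simp only [dotProduct, Fintype.sum_prod_type, Fin.sum_univ_two, prodVec, Pi.star_apply,
      RCLike.star_def, _root_.map_mul, map_sub, _root_.map_one, map_neg, map_zero, hcx,
      Complex.conj_ofReal, Fin.isValue, if_true, one_ne_zero, if_false, reduceIte]
    linear_combination ((ampA θ:ℂ)^2 + (ampB θ:ℂ)^2 + 1) * hs
  have hmain : (1/3 : ℂ) • (vecMulVec (phi1 θ) (star (phi1 θ)) + vecMulVec (phi2 θ) (star (phi2 θ))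
        + vecMulVec (phi3 θ) (star (phi3 θ)))
      = ((1 / (1 + t) ^ 2 : ℝ) : ℂ) • Nmat t := by
    rw [hφ1, hφ2, phi3, hscal]
    ext ⟨i, j⟩ ⟨k, l⟩
    fin_cases i <;> fin_cases j <;> fin_cases k <;> fin_cases l <;>
      simp only [Matrix.smul_apply, Matrix.add_apply, vecMulVec_apply, Pi.star_apply,
        RCLike.star_def, _root_.map_mul, map_sub, _root_.map_one, map_neg, map_zero, hcx,
        Complex.conj_ofReal, prodVec, Nmat, Matrix.of_apply,
        map_pow, Fin.mk_zero, Fin.mk_one, smul_eq_mul, Fin.isValue, Prod.mk.injEq, and_self, and_true, and_false, true_and,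
        false_and, or_self, or_false, false_or, if_true, if_false, reduceIte, one_ne_zero,
        zero_ne_one] <;>
      push_cast
    · ring
    · ring
    · ring
    · linear_combination (2/3*(ampA θ:ℂ)^2*(ampB θ:ℂ)^2) * hx2 + (-(ampA θ:ℂ)^2) * hBA
    · ring
    · linear_combination (-2/3*(ampA θ:ℂ)^2*(ampB θ:ℂ)^2) * hx2 + (ampA θ:ℂ)^2 * hBA
    · linear_combination (-2/3*(ampA θ:ℂ)^2*(ampB θ:ℂ)^2) * hx2
    · linear_combination (1/3*(ampA θ:ℂ)*(ampB θ:ℂ)^3) * hx2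
    · ring
    · linear_combination (-2/3*(ampA θ:ℂ)^2*(ampB θ:ℂ)^2) * hx2
    · linear_combination (-2/3*(ampA θ:ℂ)^2*(ampB θ:ℂ)^2) * hx2 + (ampA θ:ℂ)^2 * hBA
    · linear_combination (-1/3*(ampA θ:ℂ)*(ampB θ:ℂ)^3) * hx2
    · linear_combination (2/3*(ampA θ:ℂ)^2*(ampB θ:ℂ)^2) * hx2 + (-(ampA θ:ℂ)^2) * hBA
    · linear_combination (1/3*(ampA θ:ℂ)*(ampB θ:ℂ)^3) * hx2
    · linear_combination (-1/3*(ampA θ:ℂ)*(ampB θ:ℂ)^3) * hx2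
    · linear_combination (2/3*(ampB θ:ℂ)^4*(x^2-x-1)) * hx2 + ((ampB θ:ℂ)^2 + (t:ℂ)*(ampA θ:ℂ)^2) * hBA
  refine ⟨hn1, hn2, hn3, hmain, ?_, ?_, ?_, ?_⟩
  · rw [← hmain]; module
  · rw [hφ1]
    simp only [dotProduct, Fintype.sum_prod_type, Fin.sum_univ_two, prodVec, psiTheta,
      Pi.star_apply, RCLike.star_def, _root_.map_mul, map_sub, _root_.map_one, map_neg, map_zero, hcx,
      Complex.conj_ofReal, Fin.isValue, Prod.mk.injEq, and_self, and_true, and_false, true_and,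
      false_and, if_true, if_false, reduceIte, one_ne_zero, zero_ne_one]
    linear_combination hAB + ((Real.cos θ : ℂ) * (ampB θ:ℂ)^2) * hx2
  · rw [hφ2]
    simp only [dotProduct, Fintype.sum_prod_type, Fin.sum_univ_two, prodVec, psiTheta,
      Pi.star_apply, RCLike.star_def, _root_.map_mul, map_sub, _root_.map_one, map_neg, map_zero, hcx,
      Complex.conj_ofReal, Fin.isValue, Prod.mk.injEq, and_self, and_true, and_false, true_and,
      false_and, if_true, if_false, reduceIte, one_ne_zero, zero_ne_one]
    linear_combination hAB + ((Real.cos θ : ℂ) * (ampB θ:ℂ)^2) * hx2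
  · rw [phi3]
    simp only [dotProduct, Fintype.sum_prod_type, Fin.sum_univ_two, prodVec, psiTheta,
      Pi.star_apply, RCLike.star_def, _root_.map_mul, map_sub, _root_.map_one, map_neg, map_zero, hcx,
      Complex.conj_ofReal, Fin.isValue, Prod.mk.injEq, and_self, and_true, and_false, true_and,
      false_and, if_true, if_false, reduceIte, one_ne_zero, zero_ne_one]
    linear_combination hAB
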